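/- arXiv:2506.16651 — 2 statements merged into one kernel-verified Lean document; each statement's English description precedes it below -/
import Mathlib

section
/- Let C be a class of functions {±1}^n → {±1} and let 𝒟 be a family of distributions over {±1}^n that is closed under restrictions. Let A be a deterministic learner such that for every D ∈ 𝒟, every f ∈ C, and every k ≥ m, E_{S ~ (D_f)^k}[error(A(S), D_f)] ≤ ε. Let D* be a distribution over {±1}^n that has a depth-d decomposition into distributions in 𝒟, and let f ∈ C. Let m_train ≥ (2^d/ε)·max(2m, 8) and m_test ≥ ln(2·n^{2^d})/(2ε²). Draw independent samples S_train of m_train and S_test of m_test i.i.d. examples from D*_f; define H(ρ) := A((S_train)_ρ) for every depth-d restriction ρ, and let T̂ = T̂(S_train, S_test) be any depth-d decision tree that minimizes error(T∘H, S_test) over all depth-d decision trees T. Then E[error(T̂∘H, D*_f)] ≤ 4ε. -/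
open scoped Classical

/-- Points of the cube `{±1}^n`, encoded as `Fin n → Bool`. -/
abbrev Cube (n : ℕ) := Fin n → Bool

/-- Restrictions `ρ ∈ {±1,⋆}^n`, with `none` playing the role of `⋆`. -/
abbrev Rst (n : ℕ) := Fin n → Option Bool

/-- Labeled examples. -/
abbrev Lab (n : ℕ) := Cube n × Bool

/-- `x` is consistent with the restriction `ρ`. -/
def Consistent {n : ℕ} (x : Cube n) (ρ : Rst n) : Prop :=
  ∀ i : Fin n, ∀ b : Bool, ρ i = some b → x i = b

/-- The depth (number of non-⋆ coordinates) of a restriction. -/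
def rdepth {n : ℕ} (ρ : Rst n) : ℕ :=
  (Finset.univ.filter (fun i => ρ i ≠ none)).card

/-- `IsDT n d T` : `T` is the set of leaf restrictions of a depth-`d` decision tree over `{±1}^n`. -/
inductive IsDT (n : ℕ) : ℕ → Finset (Rst n) → Prop
  | leaf : IsDT n 0 {fun _ => none}
  | node {d : ℕ} (i : Fin n) {T₀ T₁ : Finset (Rst n)} :
      IsDT n d T₀ → IsDT n d T₁ →
      (∀ ℓ ∈ T₀, ℓ i = none) → (∀ ℓ ∈ T₁, ℓ i = none) →
      IsDT n (d + 1)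
        (T₀.image (fun ℓ => Function.update ℓ i (some false)) ∪
         T₁.image (fun ℓ => Function.update ℓ i (some true)))

/-- Empirical error of a hypothesis on a labeled multiset. -/
noncomputable def errS {n : ℕ} (h : Cube n → Bool) (S : Multiset (Lab n)) : ℝ :=
  ((S.filter (fun p => h p.1 ≠ p.2)).card : ℝ) / (S.card : ℝ)

/-- Empirical error of a partial (`Option Bool`-valued) hypothesis on a labeled multiset;
`⊥ = none` always counts as a misclassification. -/
noncomputable def errSo {n : ℕ} (h : Cube n → Option Bool) (S : Multiset (Lab n)) : ℝ :=
  ((S.filter (fun p => h p.1 ≠ some p.2)).card : ℝ) / (S.card : ℝ)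

/-- True error of a hypothesis with respect to a distribution on labeled examples. -/
noncomputable def errD {n : ℕ} (h : Cube n → Bool) (D : Lab n → ℝ) : ℝ :=
  ∑ p : Lab n, if h p.1 ≠ p.2 then D p else 0

/-- True error of a partial hypothesis with respect to a distribution on labeled examples. -/
noncomputable def errDo {n : ℕ} (h : Cube n → Option Bool) (D : Lab n → ℝ) : ℝ :=
  ∑ p : Lab n, if h p.1 ≠ some p.2 then D p else 0

/-- The multiset of samples of a tuple. -/
def toMS {α : Type*} {m : ℕ} (y : Fin m → α) : Multiset α := ↑(List.ofFn y)

/-- `T ∘ H` : the decision-tree-composed hypothesis. -/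
noncomputable def treeHyp {n : ℕ} (T : Finset (Rst n)) (H : Rst n → Cube n → Bool)
    (x : Cube n) : Bool :=
  if h : ∃ ℓ, ℓ ∈ T ∧ Consistent x ℓ then H h.choose x else false

/-- `P ∘ H` : the subcube-partition-composed hypothesis (`none` = ⊥ off the partition). -/
noncomputable def partHyp {n s : ℕ} (ρ : Fin s → Rst n) (H : Rst n → Cube n → Bool)
    (x : Cube n) : Option Bool :=
  if h : ∃ i, Consistent x (ρ i) then some (H (ρ h.choose) x) else none

/-- `L ∘ H` : the subcube-list-composed hypothesis (first consistent subcube wins). -/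
noncomputable def listHyp {n : ℕ} (H : Rst n → Cube n → Bool) :
    List (Rst n) → Cube n → Option Bool
  | [], _ => none
  | π :: L, x => if Consistent x π then some (H π x) else listHyp H L x

/-- Mass of a distribution on the subcube of a restriction. -/
noncomputable def rmass {n : ℕ} (D : Cube n → ℝ) (ρ : Rst n) : ℝ :=
  ∑ x ∈ Finset.univ.filter (fun x => Consistent x ρ), D x

/-- `D` conditioned on the subcube of the restriction `ρ`. -/
noncomputable def condD {n : ℕ} (D : Cube n → ℝ) (ρ : Rst n) : Cube n → ℝ :=
  fun x => if Consistent x ρ then D x / rmass D ρ else 0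

/-- The labeled distribution `D_f` of `(x, f(x))`, `x ~ D`. -/
def labD {n : ℕ} (D : Cube n → ℝ) (f : Cube n → Bool) : Lab n → ℝ :=
  fun p => if p.2 = f p.1 then D p.1 else 0



section Helpers

lemma exp_neg_le_quad {s : ℝ} (hs : 0 ≤ s) : Real.exp (-s) ≤ 1 - s + s^2/2 := by
  set f : ℝ → ℝ := fun u => 1 - u + u^2/2 - Real.exp (-u) with hf
  have hderiv : ∀ u : ℝ, HasDerivAt f (-1 + u + Real.exp (-u)) u := by
    intro u
    have h1 : HasDerivAt (fun u : ℝ => Real.exp (-u)) (-Real.exp (-u)) u := by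
      simpa [Function.comp_def] using (Real.hasDerivAt_exp (-u)).comp u (hasDerivAt_neg u)
    have h2 : HasDerivAt (fun u : ℝ => 1 - u + u^2/2) (-1 + u) u := by
      have h3 : HasDerivAt (fun u : ℝ => u^2/2) u u := by
        simpa using (hasDerivAt_pow 2 u).div_const 2
      have h4 : HasDerivAt (fun u : ℝ => 1 - u) (-1) u := by
        simpa using (hasDerivAt_id u).const_sub 1
      exact h4.add h3
    have := h2.sub h1; rw [sub_neg_eq_add] at this; exact this
  have hmono : Monotone f := by
    apply monotone_of_deriv_nonneg
    · exact fun u => (hderiv u).differentiableAt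
    · intro u
      rw [(hderiv u).deriv]
      nlinarith [Real.add_one_le_exp (-u)]
  have h0 : f 0 = 0 := by simp [hf]
  have := hmono hs
  rw [h0] at this
  simp only [hf] at this
  linarith

lemma exp_neg_le_inv {x : ℝ} (hx : 0 < x) : Real.exp (-x) ≤ 1 / x := by
  rw [Real.exp_neg, ← one_div]
  apply one_div_le_one_div_of_le hx
  have := Real.add_one_le_exp x
  linarith

lemma bern_mgf_le {μ s : ℝ} (hμ0 : 0 ≤ μ) (hμ1 : μ ≤ 1) (hs : 0 ≤ s) :
    Real.exp (s*μ) * (1 - μ + μ * Real.exp (-s)) ≤ Real.exp (s^2/2) := by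
  have hpos : (0:ℝ) < Real.exp (s*μ) := Real.exp_pos _
  have h1 : 1 - μ + μ * Real.exp (-s) ≤ Real.exp (-(μ * (1 - Real.exp (-s)))) := by
    have := Real.add_one_le_exp (-(μ * (1 - Real.exp (-s))))
    linarith
  have h2 : Real.exp (s*μ) * (1 - μ + μ * Real.exp (-s)) ≤
      Real.exp (s*μ) * Real.exp (-(μ * (1 - Real.exp (-s)))) := by
    apply mul_le_mul_of_nonneg_left h1 hpos.le
  rw [← Real.exp_add] at h2
  refine h2.trans (Real.exp_le_exp.2 ?_)
  have h3 : Real.exp (-s) ≤ 1 - s + s^2/2 := exp_neg_le_quad hs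
  nlinarith [Real.exp_pos (-s), sq_nonneg s]


lemma sum_prod_fn {α : Type*} [Fintype α] :
    ∀ (k : ℕ) (F : Fin k → α → ℝ),
      ∑ y : Fin k → α, ∏ i, F i (y i) = ∏ i, ∑ a, F i a := by
  intro k
  induction k with
  | zero => intro F; simp
  | succ k ih =>
    intro F
    rw [← (Fin.consEquiv (fun _ : Fin (k+1) => α)).sum_comp (fun y => ∏ i, F i (y i))]
    rw [Fintype.sum_prod_type]
    simp only [Fin.consEquiv_apply]
    have : ∀ (a : α) (y : Fin k → α),
        ∏ i, F i ((Fin.cons a y : Fin (k+1) → α) i) = F 0 a * ∏ i, F i.succ (y i) := by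
      intro a y
      rw [Fin.prod_univ_succ]
      simp
    simp_rw [this]
    rw [Fin.prod_univ_succ]
    simp_rw [← Finset.mul_sum, ← Finset.sum_mul]
    rw [ih (fun i a => F i.succ a)]

lemma toMS_card {α : Type*} {m : ℕ} (y : Fin m → α) : (toMS y).card = m := by
  simp [toMS]

lemma toMS_cons {α : Type*} {m : ℕ} (a : α) (y : Fin m → α) :
    toMS (Fin.cons a y) = a ::ₘ toMS y := by
  simp [toMS, List.ofFn_succ]

lemma toMS_filter_card {α : Type*} {m : ℕ} (y : Fin m → α) (P : α → Prop) [DecidablePred P] :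
    (((toMS y).filter P).card : ℝ) = ∑ j, if P (y j) then (1:ℝ) else 0 := by
  induction m with
  | zero => simp [toMS]
  | succ m ih =>
    rw [← Fin.cons_self_tail y, toMS_cons, Multiset.filter_cons, Fin.sum_univ_succ]
    by_cases h : P (Fin.cons (y 0) (Fin.tail y) 0)
    · simp only [Fin.cons_zero] at h ⊢
      rw [if_pos h]
      simp only [h, if_true]
      rw [Multiset.card_add]
      push_cast
      rw [ih (Fin.tail y)]
      simp only [Fin.cons_succ, Multiset.card_singleton, Nat.cast_one]
    · simp only [Fin.cons_zero] at h ⊢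
      rw [if_neg h]
      simp only [h, if_false]
      rw [zero_add, ih (Fin.tail y), zero_add]
      simp only [Fin.cons_succ, Multiset.card_singleton, Nat.cast_one]


lemma consistent_update {n : ℕ} {x : Cube n} {ℓ : Rst n} {i : Fin n} {b : Bool}
    (hi : ℓ i = none) :
    Consistent x (Function.update ℓ i (some b)) ↔ Consistent x ℓ ∧ x i = b := by
  constructor
  · intro h
    refine ⟨fun j b' hj => ?_, h i b (by simp)⟩
    by_cases hij : j = i
    · subst hij; rw [hi] at hj; exact absurd hj (by simp)
    · exact h j b' (by rwa [Function.update_of_ne hij])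
  · rintro ⟨h, hxi⟩ j b' hj
    by_cases hij : j = i
    · subst hij
      rw [Function.update_self] at hj
      rw [hxi]; exact Option.some_inj.1 hj
    · rw [Function.update_of_ne hij] at hj
      exact h j b' hj

lemma IsDT.existsUnique {n d : ℕ} {T : Finset (Rst n)} (h : IsDT n d T) (x : Cube n) :
    ∃! ℓ, ℓ ∈ T ∧ Consistent x ℓ := by
  induction h with
  | leaf =>
    refine ⟨fun _ => none, ⟨Finset.mem_singleton_self _, fun i b hb => by simp at hb⟩, ?_⟩
    rintro ℓ ⟨hℓ, -⟩
    simpa using hℓ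
  | @node d i T₀ T₁ h₀ h₁ hn₀ hn₁ ih₀ ih₁ =>
    -- handle both branches uniformly
    obtain ⟨ℓ₀, ⟨hm₀, hc₀⟩, hu₀⟩ := ih₀
    obtain ⟨ℓ₁, ⟨hm₁, hc₁⟩, hu₁⟩ := ih₁
    cases hxi : x i with
    | false =>
      refine ⟨Function.update ℓ₀ i (some false),
        ⟨Finset.mem_union_left _ (Finset.mem_image_of_mem _ hm₀),
         (consistent_update (hn₀ _ hm₀)).2 ⟨hc₀, hxi⟩⟩, ?_⟩
      rintro ℓ ⟨hℓ, hc⟩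
      rcases Finset.mem_union.1 hℓ with hℓ | hℓ
      · obtain ⟨ℓ', hℓ', rfl⟩ := Finset.mem_image.1 hℓ
        obtain ⟨hc', -⟩ := (consistent_update (hn₀ _ hℓ')).1 hc
        rw [hu₀ ℓ' ⟨hℓ', hc'⟩]
      · obtain ⟨ℓ', hℓ', rfl⟩ := Finset.mem_image.1 hℓ
        obtain ⟨-, hxi'⟩ := (consistent_update (hn₁ _ hℓ')).1 hc
        rw [hxi] at hxi'; exact absurd hxi' (by simp)
    | true =>
      refine ⟨Function.update ℓ₁ i (some true),
        ⟨Finset.mem_union_right _ (Finset.mem_image_of_mem _ hm₁),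
         (consistent_update (hn₁ _ hm₁)).2 ⟨hc₁, hxi⟩⟩, ?_⟩
      rintro ℓ ⟨hℓ, hc⟩
      rcases Finset.mem_union.1 hℓ with hℓ | hℓ
      · obtain ⟨ℓ', hℓ', rfl⟩ := Finset.mem_image.1 hℓ
        obtain ⟨-, hxi'⟩ := (consistent_update (hn₀ _ hℓ')).1 hc
        rw [hxi] at hxi'; exact absurd hxi' (by simp)
      · obtain ⟨ℓ', hℓ', rfl⟩ := Finset.mem_image.1 hℓ
        obtain ⟨hc', -⟩ := (consistent_update (hn₁ _ hℓ')).1 hc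
        rw [hu₁ ℓ' ⟨hℓ', hc'⟩]

lemma treeHyp_eq {n d : ℕ} {T : Finset (Rst n)} (h : IsDT n d T)
    {ℓ : Rst n} (hl : ℓ ∈ T) {x : Cube n} (hc : Consistent x ℓ)
    (H : Rst n → Cube n → Bool) : treeHyp T H x = H ℓ x := by
  have hex : ∃ ℓ', ℓ' ∈ T ∧ Consistent x ℓ' := ⟨ℓ, hl, hc⟩
  rw [treeHyp, dif_pos hex]
  obtain ⟨ℓ₀, hℓ₀, hu⟩ := h.existsUnique x
  rw [hu _ hex.choose_spec, hu _ ⟨hl, hc⟩]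

lemma IsDT.card_le {n d : ℕ} {T : Finset (Rst n)} (h : IsDT n d T) : T.card ≤ 2^d := by
  induction h with
  | leaf => simp
  | @node d i T₀ T₁ h₀ h₁ hn₀ hn₁ ih₀ ih₁ =>
    calc _ ≤ _ := Finset.card_union_le _ _
    _ ≤ 2^d + 2^d := by
        gcongr <;> exact (Finset.card_image_le).trans (by assumption)
    _ = 2^(d+1) := by ring

lemma IsDT.n_zero {d : ℕ} {T : Finset (Rst 0)} (h : IsDT 0 d T) : d = 0 := by
  cases h with
  | leaf => rfl
  | node i => exact absurd i.2 (by simp)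

lemma IsDT.zero_eq {n : ℕ} {T : Finset (Rst n)} (h : IsDT n 0 T) :
    T = {fun _ => none} := by
  cases h; rfl

lemma card_trees_le {n : ℕ} (hn : 1 ≤ n) (d : ℕ) :
    ((Finset.univ : Finset (Finset (Rst n))).filter (fun T => IsDT n d T)).card ≤ n ^ (2^d) := by
  have key : ∀ d : ℕ,
      ((Finset.univ : Finset (Finset (Rst n))).filter (fun T => IsDT n d T)).card ≤
        n ^ (2^d - 1) := by
    intro d
    induction d with
    | zero =>
      have : ((Finset.univ : Finset (Finset (Rst n))).filter (fun T => IsDT n 0 T)) ⊆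
          {({fun _ => none} : Finset (Rst n))} := fun T hT =>
        Finset.mem_singleton.2 ((Finset.mem_filter.1 hT).2.zero_eq)
      exact (Finset.card_le_card this).trans (by simp)
    | succ d ih =>
      set S := (Finset.univ : Finset (Finset (Rst n))).filter (fun T => IsDT n d T)
      have hsub : ((Finset.univ : Finset (Finset (Rst n))).filter (fun T => IsDT n (d+1) T)) ⊆
          ((Finset.univ : Finset (Fin n)) ×ˢ S ×ˢ S).image
            (fun q => q.2.1.image (fun ℓ => Function.update ℓ q.1 (some false)) ∪
                      q.2.2.image (fun ℓ => Function.update ℓ q.1 (some true))) := by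
        intro T hT
        have hT' := (Finset.mem_filter.1 hT).2
        cases hT' with
        | @node d i T₀ T₁ h₀ h₁ hn₀ hn₁ =>
          refine Finset.mem_image.2 ⟨⟨i, T₀, T₁⟩, ?_, rfl⟩
          simp only [Finset.mem_product, Finset.mem_univ, true_and]
          refine ⟨?_, ?_⟩ <;> simp only [S, Finset.mem_filter, Finset.mem_univ, true_and]
          · exact h₀
          · exact h₁
      calc _ ≤ _ := Finset.card_le_card hsub
      _ ≤ _ := Finset.card_image_le
      _ ≤ n * (n ^ (2^d - 1) * n ^ (2^d - 1)) := by
          rw [Finset.card_product, Finset.card_product, Finset.card_univ, Fintype.card_fin]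
          gcongr
      _ ≤ n ^ (2^(d+1) - 1) := by
          rw [← pow_add, ← pow_succ']
          apply pow_le_pow_right₀ hn
          have h1 : 1 ≤ 2^d := Nat.one_le_two_pow
          have h2 : 2^(d+1) = 2^d + 2^d := by ring
          omega
  exact (key d).trans (pow_le_pow_right₀ hn (Nat.sub_le _ _))


section Dist
variable {n : ℕ} {D : Cube n → ℝ} {f : Cube n → Bool}

lemma labD_nonneg (hD0 : ∀ x, 0 ≤ D x) (q : Lab n) : 0 ≤ labD D f q := by
  unfold labD; split <;> simp [hD0]

lemma labD_sum (hD1 : ∑ x : Cube n, D x = 1) : ∑ q : Lab n, labD D f q = 1 := by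
  rw [Fintype.sum_prod_type]
  rw [← hD1]
  refine Finset.sum_congr rfl fun x _ => ?_
  simp [labD, Fintype.sum_ite_eq' (f x) (fun _ => D x)]

lemma labD_sum_consistent (ℓ : Rst n) :
    ∑ q ∈ Finset.univ.filter (fun q : Lab n => Consistent q.1 ℓ), labD D f q = rmass D ℓ := by
  rw [rmass]
  rw [Finset.sum_filter, Fintype.sum_prod_type, Finset.sum_filter]
  refine Finset.sum_congr rfl fun x _ => ?_
  by_cases h : Consistent x ℓ
  · simp only [h, if_true]
    simp [labD, Fintype.sum_ite_eq' (f x) (fun _ => D x)]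
  · simp [h]

lemma labD_condD (ℓ : Rst n) (q : Lab n) :
    labD (condD D ℓ) f q = if Consistent q.1 ℓ then labD D f q / rmass D ℓ else 0 := by
  unfold labD condD
  by_cases h1 : q.2 = f q.1 <;> by_cases h2 : Consistent q.1 ℓ <;> simp [h1, h2]

lemma errD_nonneg {h : Cube n → Bool} {w : Lab n → ℝ} (hw : ∀ q, 0 ≤ w q) :
    0 ≤ errD h w :=
  Finset.sum_nonneg fun q _ => by split <;> simp [hw]

lemma errD_le_one {h : Cube n → Bool} {w : Lab n → ℝ} (hw : ∀ q, 0 ≤ w q)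
    (hw1 : ∑ q : Lab n, w q = 1) : errD h w ≤ 1 := by
  rw [← hw1]
  exact Finset.sum_le_sum fun q _ => by split <;> simp [hw]
end Dist


section Phi
variable {α : Type*} [Fintype α]

noncomputable def Phi (v : α → ℝ) (Pc : α → Prop) (G : Multiset α → ℝ) (M : ℕ) : ℝ :=
  ∑ y : Fin M → α, (∏ i, v (y i)) * G ((toMS y).filter Pc)

lemma Phi_zero (v : α → ℝ) (Pc : α → Prop) (G : Multiset α → ℝ) :
    Phi v Pc G 0 = G 0 := by
  rw [Phi, Finset.sum_eq_single_of_mem (fun i : Fin 0 => i.elim0) (Finset.mem_univ _)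
    (fun y _ hy => absurd (funext fun i => i.elim0) hy)]
  simp [toMS]

lemma Phi_succ (v : α → ℝ) (Pc : α → Prop) (G : Multiset α → ℝ) (M : ℕ) :
    Phi v Pc G (M+1) =
      ∑ a, v a * Phi v Pc (fun s => G (if Pc a then a ::ₘ s else s)) M := by
  rw [Phi]
  rw [← Fintype.sum_equiv (Fin.consEquiv (fun _ : Fin (M+1) => α))
    (fun ay => (∏ i, v ((Fin.cons ay.1 ay.2 : Fin (M+1) → α) i)) *
      G ((toMS (Fin.cons ay.1 ay.2)).filter Pc))
    (fun y => (∏ i, v (y i)) * G ((toMS y).filter Pc)) (fun ay => rfl)]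
  rw [Fintype.sum_prod_type]
  refine Finset.sum_congr rfl fun a _ => ?_
  rw [Phi, Finset.mul_sum]
  refine Finset.sum_congr rfl fun y _ => ?_
  have h1 : ∏ i, v ((Fin.cons a y : Fin (M+1) → α) i) = v a * ∏ i, v (y i) := by
    rw [Fin.prod_univ_succ]; simp
  have h2 : ((toMS (Fin.cons a y)).filter Pc) =
      (if Pc a then a ::ₘ ((toMS y).filter Pc) else ((toMS y).filter Pc)) := by
    rw [toMS_cons, Multiset.filter_cons]
    split <;> simp
  rw [h1, h2]; ring

lemma Phi_binom (w : α → ℝ) (Pc : α → Prop) (hw1 : ∑ a, w a = 1) :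
    ∀ (M : ℕ) (G : Multiset α → ℝ),
      Phi w Pc G M = ∑ k ∈ Finset.range (M+1), (M.choose k : ℝ) *
        (1 - ∑ a ∈ Finset.univ.filter Pc, w a)^(M-k) *
        Phi (fun a => if Pc a then w a else 0) Pc G k := by
  set win : α → ℝ := fun a => if Pc a then w a else 0 with hwin
  set q : ℝ := 1 - ∑ a ∈ Finset.univ.filter Pc, w a with hq
  have hsplit := Finset.sum_filter_add_sum_filter_not Finset.univ Pc w
  rw [hw1] at hsplit
  have hUstep : ∀ (k : ℕ) (G : Multiset α → ℝ),
      Phi win Pc G (k+1) = ∑ a ∈ Finset.univ.filter Pc,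
        w a * Phi win Pc (fun s => G (a ::ₘ s)) k := by
    intro k G
    rw [Phi_succ]
    rw [← Finset.sum_filter_add_sum_filter_not Finset.univ Pc
      (fun a => win a * Phi win Pc (fun s => G (if Pc a then a ::ₘ s else s)) k)]
    have hz : ∑ a ∈ Finset.univ.filter (fun a => ¬ Pc a),
        win a * Phi win Pc (fun s => G (if Pc a then a ::ₘ s else s)) k = 0 := by
      refine Finset.sum_eq_zero fun a ha => ?_
      have := (Finset.mem_filter.1 ha).2
      simp [hwin, this]
    rw [hz, add_zero]
    refine Finset.sum_congr rfl fun a ha => ?_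
    have hpa := (Finset.mem_filter.1 ha).2
    simp only [hwin, hpa, if_true]
  intro M
  induction M with
  | zero =>
    intro G
    simp [Phi_zero]
  | succ M ih =>
    intro G
    rw [Phi_succ]
    rw [← Finset.sum_filter_add_sum_filter_not Finset.univ Pc
      (fun a => w a * Phi w Pc (fun s => G (if Pc a then a ::ₘ s else s)) M)]
    have hA : ∑ a ∈ Finset.univ.filter Pc,
        w a * Phi w Pc (fun s => G (if Pc a then a ::ₘ s else s)) M
        = ∑ k ∈ Finset.range (M+1), (M.choose k : ℝ) * q^(M-k) * Phi win Pc G (k+1) := by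
      rw [Finset.sum_congr rfl (fun a (ha : a ∈ Finset.univ.filter Pc) => by
        have hpa := (Finset.mem_filter.1 ha).2
        simp only [hpa, if_true]
        rw [ih (fun s => G (a ::ₘ s)), Finset.mul_sum])]
      rw [Finset.sum_comm]
      refine Finset.sum_congr rfl fun k _ => ?_
      rw [hUstep k G, Finset.mul_sum]
      refine Finset.sum_congr rfl fun a _ => ?_
      ring
    have hB : ∑ a ∈ Finset.univ.filter (fun a => ¬ Pc a),
        w a * Phi w Pc (fun s => G (if Pc a then a ::ₘ s else s)) M
        = q * ∑ k ∈ Finset.range (M+1), (M.choose k : ℝ) * q^(M-k) * Phi win Pc G k := by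
      have : ∀ a ∈ Finset.univ.filter (fun a => ¬ Pc a),
          w a * Phi w Pc (fun s => G (if Pc a then a ::ₘ s else s)) M = w a * Phi w Pc G M := by
        intro a ha
        have hpa := (Finset.mem_filter.1 ha).2
        simp only [hpa, if_false]
      rw [Finset.sum_congr rfl this, ← Finset.sum_mul]
      have hqo : ∑ a ∈ Finset.univ.filter (fun a => ¬ Pc a), w a = q := by
        rw [hq]; linarith
      rw [hqo, ih G]
    rw [hA, hB]
    -- recombination
    set U : ℕ → ℝ := fun k => Phi win Pc G k with hU
    have hsucc : ∀ k : ℕ, M + 1 - (k+1) = M - k := fun k => Nat.succ_sub_succ M k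
    have hR : ∑ k ∈ Finset.range (M+1+1), ((M+1).choose k : ℝ) * q^(M+1-k) * U k
        = (∑ k ∈ Finset.range (M+1),
            (((M.choose k : ℝ) + (M.choose (k+1) : ℝ)) * q^(M-k) * U (k+1)))
          + q^(M+1) * U 0 := by
      rw [Finset.sum_range_succ' (fun k => ((M+1).choose k : ℝ) * q^(M+1-k) * U k) (M+1)]
      congr 1
      · refine Finset.sum_congr rfl fun k _ => ?_
        rw [Nat.choose_succ_succ, hsucc k]
        push_cast
        ring
      · simp
    have hL2 : q * ∑ k ∈ Finset.range (M+1), (M.choose k : ℝ) * q^(M-k) * U k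
        = (∑ k ∈ Finset.range (M+1), (M.choose (k+1) : ℝ) * q^(M-k) * U (k+1))
          + q^(M+1) * U 0 := by
      have e3 : q * ∑ k ∈ Finset.range (M+1), (M.choose k : ℝ) * q^(M-k) * U k
          = ∑ k ∈ Finset.range (M+1), (M.choose k : ℝ) * q^(M+1-k) * U k := by
        rw [Finset.mul_sum]
        refine Finset.sum_congr rfl fun k hk => ?_
        have hkM : k ≤ M := Nat.lt_succ_iff.1 (Finset.mem_range.1 hk)
        have h4 : M + 1 - k = (M - k) + 1 := by omega
        rw [h4, pow_succ]; ring
      rw [e3, Finset.sum_range_succ' (fun k => (M.choose k : ℝ) * q^(M+1-k) * U k) M]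
      have e5 : ∑ k ∈ Finset.range M, (M.choose (k+1) : ℝ) * q^(M+1-(k+1)) * U (k+1)
          = ∑ k ∈ Finset.range (M+1), (M.choose (k+1) : ℝ) * q^(M-k) * U (k+1) := by
        rw [Finset.sum_range_succ (fun k => (M.choose (k+1) : ℝ) * q^(M-k) * U (k+1)) M]
        simp only [Nat.choose_succ_self, Nat.cast_zero, zero_mul, add_zero]
        refine Finset.sum_congr rfl fun k _ => ?_
        rw [hsucc k]
      rw [e5]
      simp
    rw [hL2, hR]
    rw [← add_assoc, ← Finset.sum_add_distrib]
    congr 1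
    refine Finset.sum_congr rfl fun k _ => ?_
    ring


end Phi

lemma binom_tail {p : ℝ} (hp0 : 0 ≤ p) (hp1 : p ≤ 1) {M mm : ℕ} (hm : (mm:ℝ) ≤ M*p/2) :
    ∑ k ∈ (Finset.range (M+1)).filter (fun k => k < mm),
      (M.choose k : ℝ) * p^k * (1-p)^(M-k) ≤ Real.exp (-(M*p)/8) := by
  set L : ℝ := Real.log 2 with hL
  have hL0 : 0 ≤ L := Real.log_nonneg (by norm_num)
  have hq0 : (0:ℝ) ≤ 1 - p := by linarith
  have step1 : ∑ k ∈ (Finset.range (M+1)).filter (fun k => k < mm),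
      (M.choose k : ℝ) * p^k * (1-p)^(M-k)
      ≤ Real.exp (L*(M*p/2)) *
        ∑ k ∈ Finset.range (M+1), (p/2)^k * (1-p)^(M-k) * (M.choose k : ℝ) := by
    rw [Finset.mul_sum]
    refine (Finset.sum_le_sum ?_).trans
      (Finset.sum_le_sum_of_subset_of_nonneg (Finset.filter_subset _ _) ?_)
    · intro k hk
      have hkm : k < mm := (Finset.mem_filter.1 hk).2
      have hkr : (k:ℝ) ≤ M*p/2 := le_trans (by exact_mod_cast Nat.le_of_lt hkm) hm
      have h2k : (2:ℝ)^k = Real.exp (L*k) := by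
        rw [mul_comm, Real.exp_nat_mul, hL, Real.exp_log (by norm_num : (0:ℝ) < 2)]
      have hpk : p^k = Real.exp (L*k) * (p/2)^k := by
        rw [← h2k]
        rw [show p = 2*(p/2) by ring, mul_pow]
        ring_nf
      rw [hpk]
      have : Real.exp (L*k) ≤ Real.exp (L*(M*p/2)) :=
        Real.exp_le_exp.2 (by nlinarith)
      calc (M.choose k : ℝ) * (Real.exp (L*k) * (p/2)^k) * (1-p)^(M-k)
          ≤ (M.choose k : ℝ) * (Real.exp (L*(M*p/2)) * (p/2)^k) * (1-p)^(M-k) := by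
            have h1 : (0:ℝ) ≤ (M.choose k : ℝ) := Nat.cast_nonneg _
            have h2 : (0:ℝ) ≤ (p/2)^k := by positivity
            have h3 : (0:ℝ) ≤ (1-p)^(M-k) := by positivity
            have h4 : (0:ℝ) ≤ (M.choose k : ℝ) * (p/2)^k * (1-p)^(M-k) := by positivity
            nlinarith [this]
        _ = Real.exp (L*(M*p/2)) * ((p/2)^k * (1-p)^(M-k) * (M.choose k : ℝ)) := by ring
    · intro k _ _
      have h2 : (0:ℝ) ≤ (p/2)^k := by positivity
      have h3 : (0:ℝ) ≤ (1-p)^(M-k) := by positivity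
      positivity
  have step2 : ∑ k ∈ Finset.range (M+1), (p/2)^k * (1-p)^(M-k) * (M.choose k : ℝ)
      = (1 - p/2)^M := by
    rw [← add_pow]
    ring_nf
  have step3 : (1 - p/2)^M ≤ Real.exp (-(M*(p/2))) := by
    have h1 : 1 - p/2 ≤ Real.exp (-(p/2)) := by
      have := Real.add_one_le_exp (-(p/2)); linarith
    calc (1 - p/2)^M ≤ (Real.exp (-(p/2)))^M := pow_le_pow_left₀ (by linarith) h1 M
      _ = Real.exp (-(M*(p/2))) := by
          rw [← Real.exp_nat_mul]; ring_nf
  calc _ ≤ Real.exp (L*(M*p/2)) * ∑ k ∈ Finset.range (M+1),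
        (p/2)^k * (1-p)^(M-k) * (M.choose k : ℝ) := step1
    _ ≤ Real.exp (L*(M*p/2)) * Real.exp (-(M*(p/2))) := by
        rw [step2]
        exact mul_le_mul_of_nonneg_left step3 (Real.exp_pos _).le
    _ = Real.exp (L*(M*p/2) - M*(p/2)) := by rw [← Real.exp_add]; ring_nf
    _ ≤ Real.exp (-(M*p)/8) := by
        apply Real.exp_le_exp.2
        have hMp : (0:ℝ) ≤ (M:ℝ)*p := by positivity
        have hL34 : L ≤ 3/4 := le_of_lt (by
          calc L < 0.6931471808 := Real.log_two_lt_d9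
            _ ≤ 3/4 := by norm_num)
        nlinarith

section More
variable {n : ℕ}

lemma tree_sum_partition {d : ℕ} {T : Finset (Rst n)} (h : IsDT n d T) (F : Lab n → ℝ) :
    ∑ p : Lab n, F p
      = ∑ ℓ ∈ T, ∑ p ∈ Finset.univ.filter (fun p : Lab n => Consistent p.1 ℓ), F p := by
  have hlf : ∀ p : Lab n, ((h.existsUnique p.1).choose ∈ T ∧
      Consistent p.1 (h.existsUnique p.1).choose) := fun p => (h.existsUnique p.1).choose_spec.1
  rw [← Finset.sum_fiberwise_of_maps_to (g := fun p : Lab n => (h.existsUnique p.1).choose)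
    (fun p _ => (hlf p).1) F]
  refine Finset.sum_congr rfl fun ℓ hℓ => ?_
  refine Finset.sum_congr ?_ fun _ _ => rfl
  ext p
  simp only [Finset.mem_filter, Finset.mem_univ, true_and]
  constructor
  · rintro rfl; exact (hlf p).2
  · intro hc
    exact ((h.existsUnique p.1).choose_spec.2 ℓ ⟨hℓ, hc⟩).symm

lemma errD_treeHyp {d : ℕ} {T : Finset (Rst n)} (h : IsDT n d T)
    (H : Rst n → Cube n → Bool) (w : Lab n → ℝ) :
    errD (treeHyp T H) w
      = ∑ ℓ ∈ T, ∑ p ∈ Finset.univ.filter (fun p : Lab n => Consistent p.1 ℓ),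
          (if H ℓ p.1 ≠ p.2 then w p else 0) := by
  rw [errD, tree_sum_partition h]
  refine Finset.sum_congr rfl fun ℓ hℓ => Finset.sum_congr rfl fun p hp => ?_
  rw [treeHyp_eq h hℓ (Finset.mem_filter.1 hp).2 H]

lemma errS_eq {mt : ℕ} (hmt : 0 < mt) (h : Cube n → Bool) (y : Fin mt → Lab n) :
    errS h (toMS y) = (∑ j, if h (y j).1 ≠ (y j).2 then (1:ℝ) else 0) / mt := by
  rw [errS, toMS_card, toMS_filter_card]

lemma errD_eq_sum_filter (h : Cube n → Bool) (w : Lab n → ℝ) :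
    errD h w = ∑ q ∈ Finset.univ.filter (fun q : Lab n => h q.1 ≠ q.2), w q := by
  rw [errD, Finset.sum_filter]

lemma errS_expect {mt : ℕ} (hmt : 0 < mt) (w : Lab n → ℝ) (hw1 : ∑ q : Lab n, w q = 1)
    (h : Cube n → Bool) :
    ∑ y : Fin mt → Lab n, (∏ j, w (y j)) * errS h (toMS y) = errD h w := by
  have key : ∀ j : Fin mt, ∑ y : Fin mt → Lab n,
      (∏ i, w (y i)) * (if h (y j).1 ≠ (y j).2 then (1:ℝ) else 0) = errD h w := by
    intro j
    have h1 : ∀ y : Fin mt → Lab n,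
        (∏ i, w (y i)) * (if h (y j).1 ≠ (y j).2 then (1:ℝ) else 0)
        = ∏ i, (fun i a => if i = j then (if h a.1 ≠ a.2 then w a else 0) else w a) i (y i) := by
      intro y
      by_cases hy : h (y j).1 ≠ (y j).2
      · rw [if_pos hy, mul_one]
        refine Finset.prod_congr rfl fun i _ => ?_
        by_cases hij : i = j
        · subst hij; simp [hy]
        · simp [hij]
      · rw [if_neg hy, mul_zero]
        symm
        apply Finset.prod_eq_zero (Finset.mem_univ j)
        simp [hy]
    rw [Finset.sum_congr rfl fun y _ => h1 y]
    have h5 := sum_prod_fn (α := Lab n) mt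
      (fun i a => if i = j then (if h a.1 ≠ a.2 then w a else 0) else w a)
    rw [h5]
    have h2 : ∀ i : Fin mt, ∑ a : Lab n,
        (if i = j then (if h a.1 ≠ a.2 then w a else 0) else w a)
        = if i = j then errD h w else 1 := by
      intro i
      by_cases hij : i = j <;> simp [hij, hw1, errD]
    rw [Finset.prod_congr rfl fun i _ => h2 i]
    simp
  have h3 : ∀ y : Fin mt → Lab n, (∏ j, w (y j)) * errS h (toMS y)
      = ∑ j, ((∏ i, w (y i)) * (if h (y j).1 ≠ (y j).2 then (1:ℝ) else 0)) / mt := by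
    intro y
    rw [errS_eq hmt, Finset.sum_div, Finset.mul_sum]
    refine Finset.sum_congr rfl fun j _ => by ring
  rw [Finset.sum_congr rfl fun y _ => h3 y, Finset.sum_comm]
  have h4 : ∀ j : Fin mt, ∑ y : Fin mt → Lab n,
      ((∏ i, w (y i)) * (if h (y j).1 ≠ (y j).2 then (1:ℝ) else 0)) / mt
      = errD h w / mt := by
    intro j
    rw [← Finset.sum_div, key j]
  rw [Finset.sum_congr rfl fun j _ => h4 j]
  rw [Finset.sum_const, Finset.card_univ, Fintype.card_fin, nsmul_eq_mul]
  field_simp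

lemma sum_prod_weight_one {k : ℕ} (w : Lab n → ℝ) (hw1 : ∑ q : Lab n, w q = 1) :
    ∑ y : Fin k → Lab n, (∏ i, w (y i)) = 1 := by
  rw [sum_prod_fn k (fun _ a => w a)]
  simp [hw1]

lemma test_mgf {mt : ℕ} (hmt : 0 < mt) (w : Lab n → ℝ) (hw0 : ∀ q, 0 ≤ w q)
    (hw1 : ∑ q : Lab n, w q = 1) (h : Cube n → Bool) {lam : ℝ} (hlam : 0 ≤ lam) :
    ∑ y : Fin mt → Lab n, (∏ j, w (y j)) *
      Real.exp (lam * (errD h w - errS h (toMS y))) ≤ Real.exp (lam^2/(2*mt)) := by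
  set s : ℝ := lam / mt with hs
  have hs0 : 0 ≤ s := by positivity
  set μ : ℝ := errD h w with hμ
  have hμ0 : 0 ≤ μ := errD_nonneg hw0
  have hμ1 : μ ≤ 1 := errD_le_one hw0 hw1
  have hexp : ∀ y : Fin mt → Lab n, lam * (μ - errS h (toMS y))
      = ∑ j, s * (μ - (if h (y j).1 ≠ (y j).2 then (1:ℝ) else 0)) := by
    intro y
    rw [errS_eq hmt]
    rw [Finset.sum_congr rfl fun (j : Fin mt) _ => mul_sub s μ _, Finset.sum_sub_distrib]
    rw [Finset.sum_const, Finset.card_univ, Fintype.card_fin, nsmul_eq_mul, ← Finset.mul_sum]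
    have hmt' : (mt:ℝ) ≠ 0 := Nat.cast_ne_zero.2 hmt.ne'
    field_simp [hs]
    rw [hs]; field_simp
  have hterm : ∀ y : Fin mt → Lab n, (∏ j, w (y j)) *
      Real.exp (lam * (μ - errS h (toMS y)))
      = ∏ j, (w (y j) * Real.exp (s * (μ - (if h (y j).1 ≠ (y j).2 then (1:ℝ) else 0)))) := by
    intro y
    rw [hexp y, Real.exp_sum, Finset.prod_mul_distrib]
  rw [Finset.sum_congr rfl fun y _ => hterm y]
  rw [sum_prod_fn mt (fun _ a => w a * Real.exp (s * (μ - (if h a.1 ≠ a.2 then (1:ℝ) else 0))))]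
  have hbase : ∑ a : Lab n, w a * Real.exp (s * (μ - (if h a.1 ≠ a.2 then (1:ℝ) else 0)))
      = Real.exp (s*μ) * (1 - μ + μ * Real.exp (-s)) := by
    rw [← Finset.sum_filter_add_sum_filter_not Finset.univ (fun a : Lab n => h a.1 ≠ a.2)]
    have e1 : ∑ a ∈ Finset.univ.filter (fun a : Lab n => h a.1 ≠ a.2),
        w a * Real.exp (s * (μ - (if h a.1 ≠ a.2 then (1:ℝ) else 0)))
        = μ * (Real.exp (s*μ) * Real.exp (-s)) := by
      rw [hμ, errD_eq_sum_filter, Finset.sum_mul]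
      refine Finset.sum_congr rfl fun a ha => ?_
      have := (Finset.mem_filter.1 ha).2
      rw [if_pos this, ← Real.exp_add]
      ring_nf
    have e2 : ∑ a ∈ Finset.univ.filter (fun a : Lab n => ¬ (h a.1 ≠ a.2)),
        w a * Real.exp (s * (μ - (if h a.1 ≠ a.2 then (1:ℝ) else 0)))
        = (1 - μ) * Real.exp (s*μ) := by
      have hcompl : ∑ a ∈ Finset.univ.filter (fun a : Lab n => ¬ (h a.1 ≠ a.2)), w a
          = 1 - μ := by
        have := Finset.sum_filter_add_sum_filter_not Finset.univ
          (fun a : Lab n => h a.1 ≠ a.2) w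
        rw [hw1] at this
        rw [hμ, errD_eq_sum_filter]
        linarith
      rw [← hcompl, Finset.sum_mul]
      refine Finset.sum_congr rfl fun a ha => ?_
      have := (Finset.mem_filter.1 ha).2
      rw [if_neg this]
      ring_nf
    rw [e1, e2]
    ring
  rw [hbase, Finset.prod_const, Finset.card_univ, Fintype.card_fin]
  have hb0 : 0 ≤ Real.exp (s*μ) * (1 - μ + μ * Real.exp (-s)) := by
    have : 0 ≤ 1 - μ + μ * Real.exp (-s) := by
      have := Real.exp_pos (-s)
      nlinarith
    positivity
  calc (Real.exp (s*μ) * (1 - μ + μ * Real.exp (-s)))^mt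
      ≤ (Real.exp (s^2/2))^mt := pow_le_pow_left₀ hb0 (bern_mgf_le hμ0 hμ1 hs0) mt
    _ = Real.exp (mt * (s^2/2)) := by rw [← Real.exp_nat_mul]
    _ = Real.exp (lam^2/(2*mt)) := by
        congr 1
        have hmt' : (mt:ℝ) ≠ 0 := Nat.cast_ne_zero.2 hmt.ne'
        field_simp [hs]
        rw [hs]; field_simp

lemma Phi_nonneg {v : Lab n → ℝ} (hv : ∀ a, 0 ≤ v a) {Pc : Lab n → Prop}
    {G : Multiset (Lab n) → ℝ} (hG : ∀ s, 0 ≤ G s) (M : ℕ) : 0 ≤ Phi v Pc G M :=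
  Finset.sum_nonneg fun y _ => mul_nonneg (Finset.prod_nonneg fun i _ => hv _) (hG _)

lemma Phi_le_const {v : Lab n → ℝ} (hv : ∀ a, 0 ≤ v a) {Pc : Lab n → Prop}
    {G : Multiset (Lab n) → ℝ} {B : ℝ} (hB : 0 ≤ B) (hG : ∀ s, G s ≤ B) (M : ℕ) :
    Phi v Pc G M ≤ B * (∑ a, v a)^M := by
  have h1 : Phi v Pc G M ≤ ∑ y : Fin M → Lab n, (∏ i, v (y i)) * B := by
    refine Finset.sum_le_sum fun y _ => ?_
    exact mul_le_mul_of_nonneg_left (hG _) (Finset.prod_nonneg fun i _ => hv _)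
  refine h1.trans ?_
  rw [← Finset.sum_mul, sum_prod_fn M (fun _ a => v a)]
  simp only [Finset.prod_const, Finset.card_univ, Fintype.card_fin]
  rw [mul_comm]

end More

end Helpers

set_option maxHeartbeats 1000000 in
/-- correctness of `TreeLearn` (with explicit constants). Training `A` on
the restrictions of `S_train` and selecting any depth-`d` tree `T̂` minimizing the test error
on an independent test set `S_test` yields expected true error at most `4ε`, provided
`m_train ≥ (2^d/ε)·max(2m,8)` and `m_test ≥ ln(2·n^{2^d})/(2ε²)`. -/
theorem treelearn_correctness
    (n m d : ℕ) (ε : ℝ) (hε : 0 < ε)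
    (C : Set (Cube n → Bool)) (𝒟 : Set (Cube n → ℝ))
    (hclosed : ∀ D ∈ 𝒟, ∀ ρ : Rst n, 0 < rmass D ρ → condD D ρ ∈ 𝒟)
    (A : Multiset (Lab n) → Cube n → Bool)
    (hA : ∀ D ∈ 𝒟, ∀ f ∈ C, ∀ k : ℕ, m ≤ k →
      ∑ y : Fin k → Lab n, (∏ i, labD D f (y i)) * errD (A (toMS y)) (labD D f) ≤ ε)
    (Dstar : Cube n → ℝ) (hD0 : ∀ x, 0 ≤ Dstar x) (hD1 : ∑ x : Cube n, Dstar x = 1)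
    (Tstar : Finset (Rst n)) (hTstar : IsDT n d Tstar)
    (hdecomp : ∀ ℓ ∈ Tstar, 0 < rmass Dstar ℓ → condD Dstar ℓ ∈ 𝒟)
    (f : Cube n → Bool) (hf : f ∈ C)
    (mtrain mtest : ℕ)
    (hmtrain : ((2 : ℝ) ^ d / ε) * max (2 * (m : ℝ)) 8 ≤ (mtrain : ℝ))
    (hmtest : Real.log (2 * (n : ℝ) ^ (2 ^ d)) / (2 * ε ^ 2) ≤ (mtest : ℝ))
    (That : (Fin mtrain → Lab n) → (Fin mtest → Lab n) → Finset (Rst n))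
    (hThatDT : ∀ ytr yte, IsDT n d (That ytr yte))
    (hThatMin : ∀ ytr yte, ∀ T : Finset (Rst n), IsDT n d T →
      errS (treeHyp (That ytr yte)
              (fun ρ => A ((toMS ytr).filter (fun p => Consistent p.1 ρ)))) (toMS yte) ≤
      errS (treeHyp T
              (fun ρ => A ((toMS ytr).filter (fun p => Consistent p.1 ρ)))) (toMS yte)) :
    ∑ ytr : Fin mtrain → Lab n, ∑ yte : Fin mtest → Lab n,
        ((∏ i, labD Dstar f (ytr i)) * (∏ j, labD Dstar f (yte j))) *
          errD (treeHyp (That ytr yte)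
                  (fun ρ => A ((toMS ytr).filter (fun p => Consistent p.1 ρ))))
               (labD Dstar f)
      ≤ 4 * ε := by
  classical
  set w : Lab n → ℝ := labD Dstar f with hwdef
  have hw0 : ∀ q, 0 ≤ w q := labD_nonneg hD0
  have hw1 : ∑ q : Lab n, w q = 1 := labD_sum hD1
  set H : (Fin mtrain → Lab n) → Rst n → Cube n → Bool :=
    fun ytr ρ => A ((toMS ytr).filter (fun p => Consistent p.1 ρ)) with hHdef
  have hP0 : ∀ ytr : Fin mtrain → Lab n, 0 ≤ ∏ i, w (ytr i) :=
    fun ytr => Finset.prod_nonneg fun i _ => hw0 _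
  have hQ0 : ∀ yte : Fin mtest → Lab n, 0 ≤ ∏ j, w (yte j) :=
    fun yte => Finset.prod_nonneg fun j _ => hw0 _
  have hP1 : ∑ ytr : Fin mtrain → Lab n, (∏ i, w (ytr i)) = 1 := sum_prod_weight_one w hw1
  have hQ1 : ∑ yte : Fin mtest → Lab n, (∏ j, w (yte j)) = 1 := sum_prod_weight_one w hw1
  have h2d : (0:ℝ) < 2^d := by positivity
  -- TRAIN BOUND
  have train_bound : ∑ ytr : Fin mtrain → Lab n,
      (∏ i, w (ytr i)) * errD (treeHyp Tstar (H ytr)) w ≤ 2*ε := by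
    have herr : ∀ ytr : Fin mtrain → Lab n, errD (treeHyp Tstar (H ytr)) w = ∑ ℓ ∈ Tstar,
        (∑ p ∈ Finset.univ.filter (fun p : Lab n => Consistent p.1 ℓ),
          (if A ((toMS ytr).filter (fun q : Lab n => Consistent q.1 ℓ)) p.1 ≠ p.2
            then w p else 0)) :=
      fun ytr => errD_treeHyp hTstar (H ytr) w
    have leaf_bound : ∀ ℓ ∈ Tstar,
        Phi w (fun q : Lab n => Consistent q.1 ℓ)
          (fun ms => ∑ p ∈ Finset.univ.filter (fun p : Lab n => Consistent p.1 ℓ),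
            (if A ms p.1 ≠ p.2 then w p else 0)) mtrain
        ≤ rmass Dstar ℓ * ε + ε/2^d := by
      intro ℓ hℓ
      set Pc : Lab n → Prop := fun q => Consistent q.1 ℓ with hPc
      set G : Multiset (Lab n) → ℝ := fun ms => ∑ p ∈ Finset.univ.filter Pc,
          (if A ms p.1 ≠ p.2 then w p else 0) with hGdef
      set pl : ℝ := rmass Dstar ℓ with hpl
      have hplw : ∑ q ∈ Finset.univ.filter Pc, w q = pl := labD_sum_consistent ℓ
      have hpl0 : 0 ≤ pl := by
        rw [← hplw]; exact Finset.sum_nonneg fun q _ => hw0 q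
      have hpl1 : pl ≤ 1 := by
        rw [← hplw, ← hw1]
        exact Finset.sum_le_sum_of_subset_of_nonneg (Finset.filter_subset _ _)
          (fun q _ _ => hw0 q)
      have hq0 : (0:ℝ) ≤ 1 - pl := by linarith
      have hG0 : ∀ ms, 0 ≤ G ms := fun ms =>
        Finset.sum_nonneg fun p _ => by split <;> simp [hw0]
      have hGB : ∀ ms, G ms ≤ pl := by
        intro ms
        rw [← hplw]
        exact Finset.sum_le_sum fun p _ => by split <;> simp [hw0]
      set win : Lab n → ℝ := fun a => if Pc a then w a else 0 with hwin
      have hwin0 : ∀ a, 0 ≤ win a := fun a => by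
        rw [hwin]; dsimp only; split <;> simp [hw0]
      have hwinsum : ∑ a : Lab n, win a = pl := by
        rw [← hplw, Finset.sum_filter]
      have hUb : ∀ k, Phi win Pc G k ≤ pl * pl^k := by
        intro k
        have := Phi_le_const (Pc := Pc) hwin0 hpl0 hGB k
        rwa [hwinsum] at this
      have hUa : ∀ k, m ≤ k → 0 < pl → Phi win Pc G k ≤ (pl * pl^k) * ε := by
        intro k hk hplpos
        set wc : Lab n → ℝ := labD (condD Dstar ℓ) f with hwc
        have hwceq : ∀ q : Lab n, wc q = if Pc q then w q / pl else 0 :=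
          fun q => labD_condD ℓ q
        have hwineq : ∀ q, win q = pl * wc q := by
          intro q
          rw [hwceq]
          by_cases h : Pc q
          · simp only [hwin, h, if_true]
            field_simp
          · simp [hwin, h]
        have hGeq : ∀ ms, G ms = pl * errD (A ms) wc := by
          intro ms
          calc G ms
              = ∑ p : Lab n, if Pc p then (if A ms p.1 ≠ p.2 then w p else 0) else 0 :=
                Finset.sum_filter _ _
            _ = ∑ p : Lab n, pl * (if A ms p.1 ≠ p.2 then wc p else 0) := by
                refine Finset.sum_congr rfl fun q _ => ?_
                by_cases h1 : Pc q <;> by_cases h2 : A ms q.1 ≠ q.2 <;>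
                  · simp only [h1, h2, ne_eq, not_true_eq_false, not_false_eq_true, if_true, if_false, ite_self, hwceq q, mul_zero]
                    try field_simp
            _ = pl * errD (A ms) wc := by
                rw [← Finset.mul_sum, errD]
        have hkey : Phi win Pc G k = (pl * pl^k) * (∑ z : Fin k → Lab n,
            (∏ i, wc (z i)) * errD (A (toMS z)) wc) := by
          rw [Phi, Finset.mul_sum]
          refine Finset.sum_congr rfl fun z _ => ?_
          by_cases hz : ∀ i, Pc (z i)
          · have hfil : (toMS z).filter Pc = toMS z := by
              rw [Multiset.filter_eq_self]
              intro a ha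
              rw [toMS, Multiset.mem_coe] at ha
              obtain ⟨i, rfl⟩ := Set.mem_range.1 ((List.mem_ofFn' _ _).1 ha)
              exact hz i
            rw [hfil, hGeq]
            have hprod : ∏ i, win (z i) = pl^k * ∏ i, wc (z i) := by
              rw [Finset.prod_congr rfl fun i _ => hwineq (z i), Finset.prod_mul_distrib]
              simp [Finset.prod_const]
            rw [hprod]
            ring
          · push_neg at hz
            obtain ⟨i0, hi0⟩ := hz
            have h1 : win (z i0) = 0 := by simp [hwin, hi0]
            have h2 : wc (z i0) = 0 := by rw [hwceq]; simp [hi0]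
            rw [Finset.prod_eq_zero (Finset.mem_univ i0) h1,
                Finset.prod_eq_zero (Finset.mem_univ i0) h2]
            ring
        rw [hkey]
        have hD : condD Dstar ℓ ∈ 𝒟 := hdecomp ℓ hℓ hplpos
        have hAa := hA _ hD f hf k hk
        have hplk : (0:ℝ) ≤ pl * pl^k := by positivity
        exact mul_le_mul_of_nonneg_left hAa hplk
      -- expand Phi with the binomial identity
      have hbin := Phi_binom w Pc hw1 mtrain G
      rw [hplw] at hbin
      refine le_trans (le_of_eq hbin) ?_
      have hfull : ∑ k ∈ Finset.range (mtrain+1),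
          (mtrain.choose k : ℝ) * pl^k * (1-pl)^(mtrain-k) = 1 := by
        calc ∑ k ∈ Finset.range (mtrain+1),
            (mtrain.choose k : ℝ) * pl^k * (1-pl)^(mtrain-k)
            = ∑ k ∈ Finset.range (mtrain+1),
              pl^k * (1-pl)^(mtrain-k) * (mtrain.choose k : ℝ) :=
              Finset.sum_congr rfl fun k _ => by ring
          _ = (pl + (1-pl))^mtrain := (add_pow pl (1-pl) mtrain).symm
          _ = 1 := by norm_num
      by_cases hheavy : ε/2^d ≤ pl
      · have hplpos : 0 < pl := lt_of_lt_of_le (by positivity) hheavy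
        have hmax1 : (2:ℝ)^d/ε * (2*m) ≤ mtrain :=
          le_trans (by
            apply mul_le_mul_of_nonneg_left (le_max_left _ _)
            positivity) hmtrain
        have hmax2 : (2:ℝ)^d/ε * 8 ≤ mtrain :=
          le_trans (by
            apply mul_le_mul_of_nonneg_left (le_max_right _ _)
            positivity) hmtrain
        have hm2 : (m:ℝ) ≤ mtrain * pl / 2 := by
          have h1 : (2:ℝ)^d/ε * (2*m) * (ε/2^d) ≤ mtrain * pl := by
            apply mul_le_mul hmax1 hheavy (by positivity)
            positivity
          have h2 : (2:ℝ)^d/ε * (2*m) * (ε/2^d) = 2*m := by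
            field_simp
          linarith
        have htail := binom_tail hpl0 hpl1 (M := mtrain) (mm := m) hm2
        rw [← Finset.sum_filter_add_sum_filter_not (Finset.range (mtrain+1))
          (fun k => k < m)]
        have hpart1 : ∑ k ∈ (Finset.range (mtrain+1)).filter (fun k => k < m),
            (mtrain.choose k : ℝ) * (1-pl)^(mtrain-k) * Phi win Pc G k
            ≤ ε/2^d := by
          have hstep : ∑ k ∈ (Finset.range (mtrain+1)).filter (fun k => k < m),
              (mtrain.choose k : ℝ) * (1-pl)^(mtrain-k) * Phi win Pc G k
              ≤ pl * ∑ k ∈ (Finset.range (mtrain+1)).filter (fun k => k < m),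
                (mtrain.choose k : ℝ) * pl^k * (1-pl)^(mtrain-k) := by
            rw [Finset.mul_sum]
            refine Finset.sum_le_sum fun k _ => ?_
            have hc : (0:ℝ) ≤ (mtrain.choose k : ℝ) * (1-pl)^(mtrain-k) := by positivity
            calc (mtrain.choose k : ℝ) * (1-pl)^(mtrain-k) * Phi win Pc G k
                ≤ (mtrain.choose k : ℝ) * (1-pl)^(mtrain-k) * (pl * pl^k) := by
                  exact mul_le_mul_of_nonneg_left (hUb k) hc
              _ = pl * ((mtrain.choose k : ℝ) * pl^k * (1-pl)^(mtrain-k)) := by ring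
          refine hstep.trans ?_
          have hexp : pl * Real.exp (-((mtrain:ℝ)*pl)/8) ≤ ε/2^d := by
            have hx : (0:ℝ) < 2^d*pl/ε := by positivity
            have he1 : Real.exp (-((mtrain:ℝ)*pl)/8) ≤ Real.exp (-(2^d*pl/ε)) := by
              apply Real.exp_le_exp.2
              have h8 : (2:ℝ)^d/ε*8*pl ≤ mtrain*pl :=
                mul_le_mul_of_nonneg_right hmax2 hpl0
              have h9 : (2:ℝ)^d/ε*8*pl = 8*(2^d*pl/ε) := by ring
              nlinarith
            have he2 : Real.exp (-(2^d*pl/ε)) ≤ 1/(2^d*pl/ε) := exp_neg_le_inv hx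
            have he3 : pl * (1/(2^d*pl/ε)) = ε/2^d := by
              field_simp
            calc pl * Real.exp (-((mtrain:ℝ)*pl)/8)
                ≤ pl * (1/(2^d*pl/ε)) := by
                  apply mul_le_mul_of_nonneg_left (he1.trans he2) hpl0
              _ = ε/2^d := he3
          refine le_trans ?_ hexp
          exact mul_le_mul_of_nonneg_left htail hpl0
        have hpart2 : ∑ k ∈ (Finset.range (mtrain+1)).filter (fun k => ¬ k < m),
            (mtrain.choose k : ℝ) * (1-pl)^(mtrain-k) * Phi win Pc G k
            ≤ pl * ε := by
          have hstep : ∑ k ∈ (Finset.range (mtrain+1)).filter (fun k => ¬ k < m),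
              (mtrain.choose k : ℝ) * (1-pl)^(mtrain-k) * Phi win Pc G k
              ≤ (pl*ε) * ∑ k ∈ (Finset.range (mtrain+1)).filter (fun k => ¬ k < m),
                (mtrain.choose k : ℝ) * pl^k * (1-pl)^(mtrain-k) := by
            rw [Finset.mul_sum]
            refine Finset.sum_le_sum fun k hk => ?_
            have hkm : m ≤ k := Nat.le_of_not_lt (Finset.mem_filter.1 hk).2
            have hc : (0:ℝ) ≤ (mtrain.choose k : ℝ) * (1-pl)^(mtrain-k) := by positivity
            calc (mtrain.choose k : ℝ) * (1-pl)^(mtrain-k) * Phi win Pc G k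
                ≤ (mtrain.choose k : ℝ) * (1-pl)^(mtrain-k) * ((pl * pl^k) * ε) :=
                  mul_le_mul_of_nonneg_left (hUa k hkm hplpos) hc
              _ = (pl*ε) * ((mtrain.choose k : ℝ) * pl^k * (1-pl)^(mtrain-k)) := by ring
          refine hstep.trans ?_
          have hsub : ∑ k ∈ (Finset.range (mtrain+1)).filter (fun k => ¬ k < m),
              (mtrain.choose k : ℝ) * pl^k * (1-pl)^(mtrain-k)
              ≤ ∑ k ∈ Finset.range (mtrain+1),
                (mtrain.choose k : ℝ) * pl^k * (1-pl)^(mtrain-k) :=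
            Finset.sum_le_sum_of_subset_of_nonneg (Finset.filter_subset _ _)
              (fun k _ _ => by positivity)
          rw [hfull] at hsub
          have hple : (0:ℝ) ≤ pl*ε := by positivity
          nlinarith
        linarith
      · -- light leaf
        push_neg at hheavy
        have hstep : ∑ k ∈ Finset.range (mtrain+1),
            (mtrain.choose k : ℝ) * (1-pl)^(mtrain-k) * Phi win Pc G k
            ≤ pl * ∑ k ∈ Finset.range (mtrain+1),
              (mtrain.choose k : ℝ) * pl^k * (1-pl)^(mtrain-k) := by
          rw [Finset.mul_sum]
          refine Finset.sum_le_sum fun k _ => ?_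
          have hc : (0:ℝ) ≤ (mtrain.choose k : ℝ) * (1-pl)^(mtrain-k) := by positivity
          calc (mtrain.choose k : ℝ) * (1-pl)^(mtrain-k) * Phi win Pc G k
              ≤ (mtrain.choose k : ℝ) * (1-pl)^(mtrain-k) * (pl * pl^k) :=
                mul_le_mul_of_nonneg_left (hUb k) hc
            _ = pl * ((mtrain.choose k : ℝ) * pl^k * (1-pl)^(mtrain-k)) := by ring
        rw [hfull, mul_one] at hstep
        have : (0:ℝ) ≤ pl * ε := by positivity
        linarith
    have hrm1 : ∑ ℓ ∈ Tstar, rmass Dstar ℓ = 1 := by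
      rw [Finset.sum_congr rfl fun ℓ (_ : ℓ ∈ Tstar) => (labD_sum_consistent ℓ).symm,
        ← tree_sum_partition hTstar w]
      exact hw1
    calc ∑ ytr : Fin mtrain → Lab n, (∏ i, w (ytr i)) * errD (treeHyp Tstar (H ytr)) w
        = ∑ ℓ ∈ Tstar, Phi w (fun q : Lab n => Consistent q.1 ℓ)
            (fun ms => ∑ p ∈ Finset.univ.filter (fun p : Lab n => Consistent p.1 ℓ),
              (if A ms p.1 ≠ p.2 then w p else 0)) mtrain := by
          rw [Finset.sum_congr rfl fun ytr (_ : ytr ∈ Finset.univ) => by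
            rw [herr ytr, Finset.mul_sum]]
          rw [Finset.sum_comm]
          exact Finset.sum_congr rfl fun ℓ _ => rfl
      _ ≤ ∑ ℓ ∈ Tstar, (rmass Dstar ℓ * ε + ε/2^d) := Finset.sum_le_sum leaf_bound
      _ = (∑ ℓ ∈ Tstar, rmass Dstar ℓ) * ε + Tstar.card * (ε/2^d) := by
          rw [Finset.sum_add_distrib, Finset.sum_mul, Finset.sum_const, nsmul_eq_mul]
      _ ≤ 2*ε := by
          rw [hrm1, one_mul]
          have hcard : (Tstar.card : ℝ) ≤ 2^d := by
            exact_mod_cast hTstar.card_le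
          have h5 : (0:ℝ) ≤ ε/2^d := by positivity
          have h6 : (2:ℝ)^d * (ε/2^d) = ε := by field_simp
          nlinarith
  -- goal rearrangement
  have hsplit : ∀ ytr : Fin mtrain → Lab n,
      ∑ yte : Fin mtest → Lab n,
        ((∏ i, w (ytr i)) * (∏ j, w (yte j))) *
          errD (treeHyp (That ytr yte) (H ytr)) w
      = (∏ i, w (ytr i)) * ∑ yte : Fin mtest → Lab n,
          (∏ j, w (yte j)) * errD (treeHyp (That ytr yte) (H ytr)) w := by
    intro ytr
    rw [Finset.mul_sum]
    exact Finset.sum_congr rfl fun yte _ => by ring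
  by_cases hn : n = 0
  · -- degenerate case: only one tree
    subst hn
    have hd0 : d = 0 := hTstar.n_zero
    have hTs : Tstar = {fun _ => none} := by
      subst hd0; exact hTstar.zero_eq
    have hThat : ∀ ytr yte, That ytr yte = Tstar := by
      intro ytr yte
      have h1 := hThatDT ytr yte
      rw [hd0] at h1
      rw [h1.zero_eq, hTs]
    calc ∑ ytr : Fin mtrain → Lab 0, ∑ yte : Fin mtest → Lab 0,
          ((∏ i, labD Dstar f (ytr i)) * (∏ j, labD Dstar f (yte j))) *
            errD (treeHyp (That ytr yte)
              (fun ρ => A ((toMS ytr).filter (fun p => Consistent p.1 ρ)))) (labD Dstar f)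
        = ∑ ytr : Fin mtrain → Lab 0, (∏ i, w (ytr i)) *
            ∑ yte : Fin mtest → Lab 0, (∏ j, w (yte j)) * errD (treeHyp Tstar (H ytr)) w := by
          refine Finset.sum_congr rfl fun ytr _ => ?_
          refine (hsplit ytr).trans ?_
          congr 1
          exact Finset.sum_congr rfl fun yte _ => by rw [hThat ytr yte]
      _ = ∑ ytr : Fin mtrain → Lab 0, (∏ i, w (ytr i)) * errD (treeHyp Tstar (H ytr)) w := by
          refine Finset.sum_congr rfl fun ytr _ => ?_
          rw [← Finset.sum_mul, hQ1, one_mul]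
      _ ≤ 2*ε := train_bound
      _ ≤ 4*ε := by linarith
  -- main case : n ≥ 1
  have hn1 : 1 ≤ n := Nat.one_le_iff_ne_zero.2 hn
  have test_bound : ∀ ytr : Fin mtrain → Lab n,
      ∑ yte : Fin mtest → Lab n, (∏ j, w (yte j)) *
        errD (treeHyp (That ytr yte) (H ytr)) w
      ≤ errD (treeHyp Tstar (H ytr)) w + 2*ε := by
    set 𝒯 : Finset (Finset (Rst n)) :=
      (Finset.univ : Finset (Finset (Rst n))).filter (fun T => IsDT n d T) with hTT
    have hTstarMem : Tstar ∈ 𝒯 := Finset.mem_filter.2 ⟨Finset.mem_univ _, hTstar⟩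
    have hTne : 𝒯.Nonempty := ⟨Tstar, hTstarMem⟩
    have hN1 : (1:ℝ) ≤ (𝒯.card : ℝ) := by
      have := Finset.card_pos.2 hTne
      exact_mod_cast this
    have hNle : (𝒯.card : ℝ) ≤ (n:ℝ)^(2^d) := by
      exact_mod_cast card_trees_le hn1 d
    set B : ℝ := Real.log (2 * (n:ℝ)^(2^d)) with hBdef
    have hnR : (1:ℝ) ≤ (n:ℝ)^(2^d) := by
      apply one_le_pow₀
      exact_mod_cast hn1
    have hBpos : 0 < B := Real.log_pos (by nlinarith)
    have hmtpos : 0 < (mtest:ℝ) := lt_of_lt_of_le (by positivity : (0:ℝ) < B/(2*ε^2)) hmtest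
    have hmt : 0 < mtest := by exact_mod_cast hmtpos
    set lam : ℝ := Real.sqrt (2*mtest*B) with hlamdef
    have hlam0 : 0 < lam := Real.sqrt_pos.2 (by positivity)
    have hlamsq : lam^2 = 2*mtest*B := Real.sq_sqrt (by positivity)
    intro ytr
    set dev : Finset (Rst n) → (Fin mtest → Lab n) → ℝ :=
      fun T yte => errD (treeHyp T (H ytr)) w - errS (treeHyp T (H ytr)) (toMS yte) with hdev
    set Es : ℝ := ∑ yte : Fin mtest → Lab n, (∏ j, w (yte j)) *
      (𝒯.sup' hTne (fun T => dev T yte)) with hEsdef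
    have hEsup : Es ≤ 2*ε := by
      have hjensen : Real.exp (lam * Es)
          ≤ ∑ yte : Fin mtest → Lab n, (∏ j, w (yte j)) *
            Real.exp (lam * (𝒯.sup' hTne (fun T => dev T yte))) := by
        have hj := convexOn_exp.map_sum_le (t := (Finset.univ : Finset (Fin mtest → Lab n)))
          (w := fun yte : Fin mtest → Lab n => ∏ j, w (yte j))
          (p := fun yte => lam * (𝒯.sup' hTne (fun T => dev T yte)))
          (fun yte _ => hQ0 yte) hQ1 (fun _ _ => Set.mem_univ _)
        have h0 : ∑ yte : Fin mtest → Lab n, (∏ j, w (yte j)) •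
            (lam * 𝒯.sup' hTne (fun T => dev T yte)) = lam * Es := by
          rw [hEsdef, Finset.mul_sum]
          exact Finset.sum_congr rfl fun yte _ => by rw [smul_eq_mul]; ring
        rw [h0] at hj
        refine hj.trans (le_of_eq ?_)
        exact Finset.sum_congr rfl fun yte _ => by rw [smul_eq_mul]
      have hsupexp : ∀ yte : Fin mtest → Lab n,
          Real.exp (lam * (𝒯.sup' hTne (fun T => dev T yte)))
          ≤ ∑ T ∈ 𝒯, Real.exp (lam * dev T yte) := by
        intro yte
        obtain ⟨T0, hT0, hsup⟩ := Finset.exists_mem_eq_sup' hTne (fun T => dev T yte)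
        rw [hsup]
        exact Finset.single_le_sum (f := fun T => Real.exp (lam * dev T yte))
          (fun T _ => (Real.exp_pos _).le) hT0
      have hmgf : ∀ T ∈ 𝒯, ∑ yte : Fin mtest → Lab n, (∏ j, w (yte j)) *
          Real.exp (lam * dev T yte) ≤ Real.exp (lam^2/(2*mtest)) := by
        intro T _
        exact test_mgf hmt w hw0 hw1 (treeHyp T (H ytr)) hlam0.le
      have hchain : Real.exp (lam * Es) ≤ 𝒯.card * Real.exp (lam^2/(2*mtest)) := by
        refine hjensen.trans ?_
        calc ∑ yte : Fin mtest → Lab n, (∏ j, w (yte j)) *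
              Real.exp (lam * (𝒯.sup' hTne (fun T => dev T yte)))
            ≤ ∑ yte : Fin mtest → Lab n, (∏ j, w (yte j)) *
              (∑ T ∈ 𝒯, Real.exp (lam * dev T yte)) := by
              refine Finset.sum_le_sum fun yte _ => ?_
              exact mul_le_mul_of_nonneg_left (hsupexp yte) (hQ0 yte)
          _ = ∑ T ∈ 𝒯, ∑ yte : Fin mtest → Lab n, (∏ j, w (yte j)) *
              Real.exp (lam * dev T yte) := by
              rw [Finset.sum_comm]
              exact Finset.sum_congr rfl fun yte _ => Finset.mul_sum _ _ _
          _ ≤ ∑ T ∈ 𝒯, Real.exp (lam^2/(2*mtest)) := Finset.sum_le_sum hmgf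
          _ = 𝒯.card * Real.exp (lam^2/(2*mtest)) := by
              rw [Finset.sum_const, nsmul_eq_mul]
      have hlog : lam * Es ≤ Real.log ((𝒯.card : ℝ) * Real.exp (lam^2/(2*mtest))) := by
        refine (Real.le_log_iff_exp_le ?_).2 hchain
        positivity
      rw [Real.log_mul (by positivity) (Real.exp_ne_zero _), Real.log_exp] at hlog
      have hlogN : Real.log (𝒯.card : ℝ) ≤ B := by
        rw [hBdef]
        apply Real.log_le_log (by linarith)
        nlinarith
      have hlamsq2 : lam^2/(2*mtest) = B := by
        rw [hlamsq]
        field_simp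
      rw [hlamsq2] at hlog
      have hB2m : B ≤ 2*ε^2*mtest := by
        rw [div_le_iff₀ (by positivity)] at hmtest
        rw [hBdef]
        linarith
      have hεlam : 0 ≤ ε*lam := by positivity
      have hsq : B^2 ≤ (ε*lam)^2 := by nlinarith [hlamsq, hB2m, hBpos, hmtpos]
      have hBlam : B ≤ ε*lam := by nlinarith [hsq, hεlam, hBpos]
      have hfin : lam * Es ≤ lam * (2*ε) := by nlinarith [hlog, hlogN, hBlam]
      exact le_of_mul_le_mul_left hfin hlam0
    have hpoint : ∀ yte : Fin mtest → Lab n, errD (treeHyp (That ytr yte) (H ytr)) w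
        ≤ errS (treeHyp Tstar (H ytr)) (toMS yte) + 𝒯.sup' hTne (fun T => dev T yte) := by
      intro yte
      have hmem : That ytr yte ∈ 𝒯 :=
        Finset.mem_filter.2 ⟨Finset.mem_univ _, hThatDT ytr yte⟩
      have h1 : dev (That ytr yte) yte ≤ 𝒯.sup' hTne (fun T => dev T yte) :=
        Finset.le_sup' (fun T => dev T yte) hmem
      have h2 := hThatMin ytr yte Tstar hTstar
      have h3 : errD (treeHyp (That ytr yte) (H ytr)) w
          = errS (treeHyp (That ytr yte) (H ytr)) (toMS yte) + dev (That ytr yte) yte := by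
        rw [hdev]
        ring
      rw [h3]
      exact add_le_add h2 h1
    calc ∑ yte : Fin mtest → Lab n, (∏ j, w (yte j)) *
          errD (treeHyp (That ytr yte) (H ytr)) w
        ≤ ∑ yte : Fin mtest → Lab n, (∏ j, w (yte j)) *
          (errS (treeHyp Tstar (H ytr)) (toMS yte) + 𝒯.sup' hTne (fun T => dev T yte)) := by
          refine Finset.sum_le_sum fun yte _ => ?_
          exact mul_le_mul_of_nonneg_left (hpoint yte) (hQ0 yte)
      _ = (∑ yte : Fin mtest → Lab n, (∏ j, w (yte j)) *
            errS (treeHyp Tstar (H ytr)) (toMS yte)) + Es := by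
          rw [hEsdef, ← Finset.sum_add_distrib]
          exact Finset.sum_congr rfl fun yte _ => by ring
      _ ≤ errD (treeHyp Tstar (H ytr)) w + 2*ε := by
          rw [errS_expect hmt w hw1 (treeHyp Tstar (H ytr))]
          linarith [hEsup]
  calc ∑ ytr : Fin mtrain → Lab n, ∑ yte : Fin mtest → Lab n,
        ((∏ i, labD Dstar f (ytr i)) * (∏ j, labD Dstar f (yte j))) *
          errD (treeHyp (That ytr yte)
            (fun ρ => A ((toMS ytr).filter (fun p => Consistent p.1 ρ)))) (labD Dstar f)
      = ∑ ytr : Fin mtrain → Lab n, (∏ i, w (ytr i)) *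
          ∑ yte : Fin mtest → Lab n, (∏ j, w (yte j)) *
            errD (treeHyp (That ytr yte) (H ytr)) w := by
        exact Finset.sum_congr rfl fun ytr _ => hsplit ytr
    _ ≤ ∑ ytr : Fin mtrain → Lab n, (∏ i, w (ytr i)) *
          (errD (treeHyp Tstar (H ytr)) w + 2*ε) := by
        refine Finset.sum_le_sum fun ytr _ => ?_
        exact mul_le_mul_of_nonneg_left (test_bound ytr) (hP0 ytr)
    _ = (∑ ytr : Fin mtrain → Lab n, (∏ i, w (ytr i)) * errD (treeHyp Tstar (H ytr)) w)
          + 2*ε := by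
        rw [Finset.sum_congr rfl (fun (ytr : Fin mtrain → Lab n) _ =>
          mul_add (∏ i, w (ytr i)) (errD (treeHyp Tstar (H ytr)) w) (2*ε)),
          Finset.sum_add_distrib, ← Finset.sum_mul, hP1, one_mul]
    _ ≤ 2*ε + 2*ε := by linarith [train_bound]
    _ = 4*ε := by ring
end

section
/- Let d ≥ 0, s ≥ 1, ε ≥ 0, and ε_a ∈ (0,1). Let S be a finite nonempty labeled multiset of pairs in {±1}^n × {±1}, and let H assign to each restriction ρ of depth at most d a hypothesis H(ρ) : {±1}^n → {±1}. Suppose there exist pairwise disjoint restrictions ρ₁, …, ρ_s, each of depth at most d, such that error(P∘H, S) ≤ ε, where P∘H(x) = H(ρ_i)(x) for the unique i (if any) with x consistent with ρ_i and P∘H(x) = ⊥ (counted as a misclassification) otherwise. Then there exists an ordered list L = (π₁, …, π_k) of restrictions, each of depth at most d, with k ≤ ⌈2s·ln(1/ε_a)⌉, such that error(L∘H, S) ≤ ε_a + 2ε·(1 + ln(1/ε_a)), where L∘H(x) = H(π_j)(x) for the first index j with x consistent with π_j, and L∘H(x) = ⊥ (counted as a misclassification) if no π_j is consistent with x. -/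
open scoped Classical

lemma exists_top {ι : Type*} (f : ι → ℝ) (u : Finset ι) :
    ∀ k, k ≤ u.card → ∃ A ⊆ u, A.card = k ∧
      (k:ℝ) * ∑ i ∈ u, f i ≤ (u.card : ℝ) * ∑ i ∈ A, f i := by
  induction u using Finset.strongInduction with
  | _ u ih =>
    intro k hk
    rcases Nat.eq_zero_or_pos k with rfl | hkpos
    · exact ⟨∅, Finset.empty_subset u, Finset.card_empty, by simp⟩
    rcases eq_or_lt_of_le hk with h | h
    · exact ⟨u, le_refl _, h.symm, by rw [h]⟩
    · have hu : u.Nonempty := Finset.card_pos.mp (lt_of_le_of_lt (Nat.zero_le k) h)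
      obtain ⟨i0, hi0, hmin⟩ := Finset.exists_min_image u f hu
      have hsub : u.erase i0 ⊂ u := Finset.erase_ssubset hi0
      have hcard : (u.erase i0).card = u.card - 1 := Finset.card_erase_of_mem hi0
      have hk' : k ≤ (u.erase i0).card := by omega
      obtain ⟨A, hAsub, hAcard, hA⟩ := ih _ hsub k hk'
      refine ⟨A, hAsub.trans (Finset.erase_subset _ _), hAcard, ?_⟩
      have hsum : ∑ i ∈ u.erase i0, f i = ∑ i ∈ u, f i - f i0 :=
        Finset.sum_erase_eq_sub hi0
      have havg : (u.card : ℝ) * f i0 ≤ ∑ i ∈ u, f i := by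
        calc (u.card:ℝ) * f i0 = ∑ _i ∈ u, f i0 := by
              rw [Finset.sum_const, nsmul_eq_mul]
        _ ≤ _ := Finset.sum_le_sum (fun i hi => hmin i hi)
      have hcast : ((u.erase i0).card : ℝ) = (u.card : ℝ) - 1 := by
        rw [hcard]; have : 1 ≤ u.card := hu.card_pos
        push_cast [Nat.cast_sub this]; ring
      rw [hsum, hcast] at hA
      set c : ℝ := (u.card : ℝ) with hcdef
      set T : ℝ := ∑ i ∈ u, f i
      set SA : ℝ := ∑ i ∈ A, f i
      have hc2 : (2:ℝ) ≤ c := by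
        rw [hcdef]; exact_mod_cast (by omega : 2 ≤ u.card)
      have hkc : (k:ℝ) < c := by rw [hcdef]; exact_mod_cast h
      have hk0 : (0:ℝ) ≤ (k:ℝ) := Nat.cast_nonneg k
      have h1 : (c - 1) * ((k:ℝ) * T) ≤ (c - 1) * (c * SA) := by nlinarith
      have := le_of_mul_le_mul_left h1 (by linarith : (0:ℝ) < c - 1)
      linarith

lemma listHyp_none {n s : ℕ} (H : Rst n → Cube n → Bool) (ρ : Fin s → Rst n)
    (l : List (Fin s)) (x : Cube n) (hx : ¬ ∃ i ∈ l, Consistent x (ρ i)) :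
    listHyp H (l.map ρ) x = none := by
  induction l with
  | nil => rfl
  | cons a l ih =>
    have ha : ¬ Consistent x (ρ a) := fun h => hx ⟨a, List.mem_cons_self, h⟩
    have : listHyp H ((a :: l).map ρ) x = listHyp H (l.map ρ) x := by
      simp only [List.map_cons, listHyp, if_neg ha]
    rw [this]
    exact ih (fun ⟨i, hi, hc⟩ => hx ⟨i, List.mem_cons_of_mem a hi, hc⟩)

lemma listHyp_eq_part {n s : ℕ} (H : Rst n → Cube n → Bool) (ρ : Fin s → Rst n)
    (hdisj : ∀ i j : Fin s, i ≠ j →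
      ∀ x : Cube n, Consistent x (ρ i) → Consistent x (ρ j) → False)
    (l : List (Fin s)) (x : Cube n) (hx : ∃ i ∈ l, Consistent x (ρ i)) :
    listHyp H (l.map ρ) x = partHyp ρ H x := by
  induction l with
  | nil => simp at hx
  | cons a l ih =>
    by_cases ha : Consistent x (ρ a)
    · have hex : ∃ i, Consistent x (ρ i) := ⟨a, ha⟩
      have h1 : listHyp H ((a :: l).map ρ) x = some (H (ρ a) x) := by
        simp only [List.map_cons, listHyp, if_pos ha]
      have hcs := hex.choose_spec
      have heq : hex.choose = a := by
        by_contra hne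
        exact hdisj _ _ hne x hcs ha
      rw [h1, partHyp, dif_pos hex, heq]
    · have h1 : listHyp H ((a :: l).map ρ) x = listHyp H (l.map ρ) x := by
        simp only [List.map_cons, listHyp, if_neg ha]
      rw [h1]
      apply ih
      obtain ⟨i, hi, hci⟩ := hx
      rcases List.mem_cons.mp hi with rfl | hi'
      · exact absurd hci ha
      · exact ⟨i, hi', hci⟩

lemma cover_card {n s : ℕ} (ρ : Fin s → Rst n)
    (hdisj : ∀ i j : Fin s, i ≠ j →
      ∀ x : Cube n, Consistent x (ρ i) → Consistent x (ρ j) → False)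
    (S : Multiset (Lab n)) (A : Finset (Fin s)) :
    Multiset.card (S.filter (fun p => ∃ i ∈ A, Consistent p.1 (ρ i)))
      = ∑ i ∈ A, Multiset.card (S.filter (fun p => Consistent p.1 (ρ i))) := by
  induction A using Finset.induction_on with
  | empty => simp [Multiset.filter_eq_nil]
  | @insert a A ha ih =>
    have key := Multiset.filter_add_filter (fun p : Lab n => Consistent p.1 (ρ a))
      (fun p : Lab n => ∃ i ∈ A, Consistent p.1 (ρ i)) S
    have hand : Multiset.filter (fun p : Lab n =>
        Consistent p.1 (ρ a) ∧ ∃ i ∈ A, Consistent p.1 (ρ i)) S = 0 := by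
      rw [Multiset.filter_eq_nil]
      rintro p _ ⟨hpa, i, hiA, hpi⟩
      exact hdisj a i (fun h => ha (h ▸ hiA)) p.1 hpa hpi
    have hcongr : Multiset.filter (fun p : Lab n =>
          Consistent p.1 (ρ a) ∨ ∃ i ∈ A, Consistent p.1 (ρ i)) S
        = Multiset.filter (fun p : Lab n => ∃ i ∈ insert a A, Consistent p.1 (ρ i)) S := by
      apply Multiset.filter_congr
      intro p _
      constructor
      · rintro (h | ⟨i, hi, h⟩)
        · exact ⟨a, Finset.mem_insert_self a A, h⟩
        · exact ⟨i, Finset.mem_insert_of_mem hi, h⟩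
      · rintro ⟨i, hi, h⟩
        rcases Finset.mem_insert.mp hi with rfl | hi'
        · exact Or.inl h
        · exact Or.inr ⟨i, hi', h⟩
    rw [hcongr, hand] at key
    have := congrArg Multiset.card key
    simp only [Multiset.card_add, Multiset.card_zero, add_zero] at this
    rw [Finset.sum_insert ha, ← ih, ← this]

set_option maxHeartbeats 1000000 in
/-- existential content of the greedy `FindSubcube` lemma — if some size-`s`
disjoint subcube partition (of depth ≤ d pieces) achieves error ≤ ε on `S`, then there is an
ordered subcube list of length ≤ ⌈2s·ln(1/ε_a)⌉ whose list hypothesis has error at most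
`ε_a + 2ε·(1 + ln(1/ε_a))` on `S`. -/
theorem short_subcube_list_exists
    (n d s : ℕ) (hd : 0 ≤ d) (hs : 1 ≤ s) (ε εa : ℝ) (hε : 0 ≤ ε)
    (hεa0 : 0 < εa) (hεa1 : εa < 1)
    (S : Multiset (Lab n)) (hS : S ≠ 0)
    (H : Rst n → Cube n → Bool)
    (ρ : Fin s → Rst n) (hρdepth : ∀ i, rdepth (ρ i) ≤ d)
    (hdisj : ∀ i j : Fin s, i ≠ j →
      ∀ x : Cube n, Consistent x (ρ i) → Consistent x (ρ j) → False)
    (herr : errSo (partHyp ρ H) S ≤ ε) :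
    ∃ L : List (Rst n),
      (∀ π ∈ L, rdepth π ≤ d) ∧
      L.length ≤ ⌈2 * (s : ℝ) * Real.log (1 / εa)⌉₊ ∧
      errSo (listHyp H L) S ≤ εa + 2 * ε * (1 + Real.log (1 / εa)) := by
  classical
  set N : ℕ := Multiset.card S with hNdef
  have hN : 0 < (N : ℝ) := by
    have : 0 < N := Multiset.card_pos.mpr hS
    exact_mod_cast this
  set K : ℕ := ⌈2 * (s : ℝ) * Real.log (1 / εa)⌉₊ with hKdef
  set k : ℕ := min K s with hkdef
  have hks : k ≤ s := min_le_right _ _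
  have hk : k ≤ (Finset.univ : Finset (Fin s)).card := by
    simpa using hks
  obtain ⟨A, _, hAcard, hA⟩ := exists_top
    (fun i => (Multiset.card (S.filter (fun p => Consistent p.1 (ρ i))) : ℝ))
    Finset.univ k hk
  set SA : ℝ := ∑ i ∈ A, (Multiset.card (S.filter (fun p => Consistent p.1 (ρ i))) : ℝ)
  set Su : ℝ := ∑ i : Fin s, (Multiset.card (S.filter (fun p => Consistent p.1 (ρ i))) : ℝ)
  have hAs : (k : ℝ) * Su ≤ (s : ℝ) * SA := by
    simpa using hA
  set L : List (Rst n) := A.toList.map ρ with hLdef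
  refine ⟨L, ?_, ?_, ?_⟩
  · intro π hπ
    obtain ⟨i, _, rfl⟩ := List.mem_map.mp hπ
    exact hρdepth i
  · rw [hLdef, List.length_map, Finset.length_toList, hAcard]
    exact min_le_left _ _
  -- error bound
  set ECpart : ℕ := Multiset.card (S.filter (fun p => partHyp ρ H p.1 ≠ some p.2)) with hEP
  set EClist : ℕ := Multiset.card (S.filter (fun p => listHyp H L p.1 ≠ some p.2)) with hEL
  have herr' : (ECpart : ℝ) ≤ ε * N := by
    have := herr
    rw [errSo, div_le_iff₀ hN] at this
    exact this
  -- covered card equalities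
  have hcovA : Multiset.card (S.filter (fun p => ∃ i ∈ A, Consistent p.1 (ρ i)))
      = ∑ i ∈ A, Multiset.card (S.filter (fun p => Consistent p.1 (ρ i))) :=
    cover_card ρ hdisj S A
  have hcovU : Multiset.card (S.filter (fun p => ∃ i ∈ (Finset.univ : Finset (Fin s)),
        Consistent p.1 (ρ i)))
      = ∑ i : Fin s, Multiset.card (S.filter (fun p => Consistent p.1 (ρ i))) :=
    cover_card ρ hdisj S Finset.univ
  -- uncovered-by-all ≤ partition error
  have hUncovU : (N : ℝ) - Su ≤ (ECpart : ℝ) := by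
    have hmono : Multiset.filter (fun p : Lab n =>
          ¬ ∃ i ∈ (Finset.univ : Finset (Fin s)), Consistent p.1 (ρ i)) S
        ≤ Multiset.filter (fun p : Lab n => partHyp ρ H p.1 ≠ some p.2) S := by
      apply Multiset.monotone_filter_right
      intro p hp
      have hnone : partHyp ρ H p.1 = none := by
        rw [partHyp, dif_neg]
        rintro ⟨i, hi⟩
        exact hp ⟨i, Finset.mem_univ i, hi⟩
      simp [hnone]
    have h1 := Multiset.card_le_card hmono
    have h2 := congrArg Multiset.card (Multiset.filter_add_not
      (fun p : Lab n => ∃ i ∈ (Finset.univ : Finset (Fin s)), Consistent p.1 (ρ i)) S)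
    simp only [Multiset.card_add] at h2
    have hSu' : Su = (Multiset.card (S.filter (fun p => ∃ i ∈ (Finset.univ : Finset (Fin s)),
        Consistent p.1 (ρ i))) : ℝ) := by rw [hcovU]; push_cast; rfl
    rw [hSu']
    have : (N:ℕ) = Multiset.card (S.filter (fun p => ∃ i ∈ (Finset.univ : Finset (Fin s)),
        Consistent p.1 (ρ i))) + Multiset.card (Multiset.filter (fun p : Lab n =>
          ¬ ∃ i ∈ (Finset.univ : Finset (Fin s)), Consistent p.1 (ρ i)) S) := h2.symm
    have h1' : (Multiset.card (Multiset.filter (fun p : Lab n =>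
          ¬ ∃ i ∈ (Finset.univ : Finset (Fin s)), Consistent p.1 (ρ i)) S) : ℝ)
        ≤ (ECpart : ℝ) := by exact_mod_cast h1
    have := congrArg (fun m : ℕ => (m:ℝ)) this
    push_cast at this
    linarith
  -- list error split
  have hsplit : (EClist : ℝ) ≤ ((N : ℝ) - SA) + (ECpart : ℝ) := by
    have hmono : Multiset.filter (fun p : Lab n => listHyp H L p.1 ≠ some p.2) S
        ≤ Multiset.filter (fun p : Lab n =>
            (¬ ∃ i ∈ A, Consistent p.1 (ρ i)) ∨ partHyp ρ H p.1 ≠ some p.2) S := by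
      apply Multiset.monotone_filter_right
      intro p hp
      by_cases hc : ∃ i ∈ A, Consistent p.1 (ρ i)
      · right
        obtain ⟨i, hiA, hci⟩ := hc
        have : ∃ i ∈ A.toList, Consistent p.1 (ρ i) :=
          ⟨i, (Finset.mem_toList).mpr hiA, hci⟩
        rw [← listHyp_eq_part H ρ hdisj A.toList p.1 this]
        exact hp
      · exact Or.inl hc
    have h1 := Multiset.card_le_card hmono
    have key := congrArg Multiset.card (Multiset.filter_add_filter
      (fun p : Lab n => ¬ ∃ i ∈ A, Consistent p.1 (ρ i))
      (fun p : Lab n => partHyp ρ H p.1 ≠ some p.2) S)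
    simp only [Multiset.card_add] at key
    have h2 : Multiset.card (Multiset.filter (fun p : Lab n =>
          (¬ ∃ i ∈ A, Consistent p.1 (ρ i)) ∨ partHyp ρ H p.1 ≠ some p.2) S)
        ≤ Multiset.card (Multiset.filter (fun p : Lab n =>
            ¬ ∃ i ∈ A, Consistent p.1 (ρ i)) S) + ECpart := by
      omega
    have h3 := congrArg Multiset.card (Multiset.filter_add_not
      (fun p : Lab n => ∃ i ∈ A, Consistent p.1 (ρ i)) S)
    simp only [Multiset.card_add] at h3
    have hSA' : SA = (Multiset.card (S.filter (fun p => ∃ i ∈ A, Consistent p.1 (ρ i))) : ℝ) := by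
      rw [hcovA]; push_cast; rfl
    have hc1 : (Multiset.card (Multiset.filter (fun p : Lab n =>
          ¬ ∃ i ∈ A, Consistent p.1 (ρ i)) S) : ℝ)
        = (N : ℝ) - SA := by
      rw [hSA']
      have : Multiset.card (S.filter (fun p => ∃ i ∈ A, Consistent p.1 (ρ i)))
          + Multiset.card (Multiset.filter (fun p : Lab n =>
            ¬ ∃ i ∈ A, Consistent p.1 (ρ i)) S) = N := h3
      have := congrArg (fun m : ℕ => (m:ℝ)) this
      push_cast at this
      linarith
    have hall : (EClist : ℝ) ≤ (Multiset.card (Multiset.filter (fun p : Lab n =>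
          ¬ ∃ i ∈ A, Consistent p.1 (ρ i)) S) : ℝ) + (ECpart : ℝ) := by
      exact_mod_cast le_trans h1 h2
    linarith
  -- log facts
  have hlog : 1 - εa ≤ Real.log (1 / εa) := by
    have h1 := Real.log_le_sub_one_of_pos hεa0
    rw [one_div, Real.log_inv]
    linarith
  have hlog0 : 0 ≤ Real.log (1 / εa) := by linarith
  -- k lower bound (multiplied form)
  have hklow : (1 - εa) * (s : ℝ) ≤ (k : ℝ) := by
    rcases le_or_gt s K with h | h
    · have : k = s := by omega
      rw [this]
      have hs' : (0:ℝ) < (s:ℝ) := by exact_mod_cast lt_of_lt_of_le one_pos hs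
      nlinarith [mul_pos hεa0 hs']
    · have hkK : k = K := by omega
      have hceil : 2 * (s : ℝ) * Real.log (1 / εa) ≤ (K : ℝ) := Nat.le_ceil _
      rw [hkK]
      have hs0 : (0:ℝ) ≤ (s:ℝ) := Nat.cast_nonneg s
      nlinarith
  -- final arithmetic
  rw [errSo, div_le_iff₀ hN]
  have hsR : (0:ℝ) < (s : ℝ) := by exact_mod_cast lt_of_lt_of_le one_pos hs
  have hk0 : (0:ℝ) ≤ (k:ℝ) := Nat.cast_nonneg k
  have hksR : (k:ℝ) ≤ (s:ℝ) := by exact_mod_cast hks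
  have hECN : (EClist : ℝ) ≤ (N : ℝ) := by
    have := Multiset.card_le_card (Multiset.filter_le
      (fun p : Lab n => listHyp H L p.1 ≠ some p.2) S)
    exact_mod_cast this
  have hfaclog : 0 ≤ 2 * ε * Real.log (1 / εa) := by positivity
  rcases le_or_gt (1/2 : ℝ) ε with hεbig | hεsmall
  · have hfac : (1:ℝ) ≤ εa + 2 * ε * (1 + Real.log (1 / εa)) := by linarith
    have := mul_le_mul_of_nonneg_right hfac hN.le
    linarith
  · -- ε < 1/2
    have hpos : (0:ℝ) ≤ (1-ε)*(N:ℝ) := mul_nonneg (by linarith) hN.le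
    have g1 : ((1-εa)*(s:ℝ)) * ((1-ε)*(N:ℝ)) ≤ (k:ℝ)*((1-ε)*(N:ℝ)) :=
      mul_le_mul_of_nonneg_right hklow hpos
    have g2 : (k:ℝ)*((1-ε)*(N:ℝ)) ≤ (k:ℝ)*Su :=
      mul_le_mul_of_nonneg_left (by linarith) hk0
    have hSAge : ((1-εa)*(s:ℝ))*((1-ε)*(N:ℝ)) ≤ (s:ℝ)*SA := g1.trans (g2.trans hAs)
    have f1 : (s:ℝ)*(EClist:ℝ) ≤ (s:ℝ)*(((N:ℝ)-SA)+(ECpart:ℝ)) :=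
      mul_le_mul_of_nonneg_left hsplit hsR.le
    have f2 : (s:ℝ)*(ECpart:ℝ) ≤ (s:ℝ)*(ε*(N:ℝ)) :=
      mul_le_mul_of_nonneg_left herr' hsR.le
    have hint : (0:ℝ) ≤ (s:ℝ)*(εa*(ε*(N:ℝ))) := by positivity
    have e4 : (s:ℝ)*(EClist:ℝ) ≤ (s:ℝ)*((εa+2*ε)*(N:ℝ)) := by nlinarith [f1, f2, hSAge, hint]
    have hmain : (EClist : ℝ) ≤ (εa + 2 * ε) * (N : ℝ) := le_of_mul_le_mul_left e4 hsR
    have hint2 : (0:ℝ) ≤ 2*ε*Real.log (1/εa)*(N:ℝ) := by positivity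
    nlinarith [hmain, hint2]
end
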